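/- The PF-D0 coefficient function b1 satisfies lim_{v→0⁺} b1(v) = 90987349/53222400 and lim_{v→0⁺} (b1(v) − 90987349/53222400)/v² = −16301796103/290594304000; in particular b1 tends to the corresponding coefficient of the classical Quinlan–Tremaine method as v → 0. -/

import Mathlib

open Filter

/-- The variable coefficient `b₁(v)` of the phase-fitted method PF-D0. -/
noncomputable def pfb1 (v : ℝ) : ℝ :=
  (((-124184636) * Real.cos v + 70378348 * Real.cos (2 * v) - 24862148 * Real.cos (3 * v)
        + 5153611 * Real.cos (4 * v)) * v ^ 2
      + 25 * (3013169 * v ^ 2 - 16128 * Real.cos (3 * v) + 32256 * Real.cos (4 * v)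
        - 32256 * Real.cos (5 * v) + 16128 * Real.cos (6 * v)))
    / (206438400 * v ^ 2 * (Real.sin (v / 2)) ^ 10)

/-- The variable coefficient `b₂(v)` of the phase-fitted method PF-D0. -/
noncomputable def pfb2 (v : ℝ) : ℝ :=
  (v ^ 2 * (159588050 * Real.cos v - 85350160 * Real.cos (2 * v)
        + 16708985 * Real.cos (3 * v) - 5153611 * Real.cos (5 * v))
      - 16 * (6496079 * v ^ 2 - 252000 * Real.cos (3 * v) + 504000 * Real.cos (4 * v)
        - 504000 * Real.cos (5 * v) + 252000 * Real.cos (6 * v)))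
    / (206438400 * v ^ 2 * (Real.sin (v / 2)) ^ 10)

/-- The variable coefficient `b₃(v)` of the phase-fitted method PF-D0. -/
noncomputable def pfb3 (v : ℝ) : ℝ :=
  (((-367257540) * Real.cos v + 183567900 * Real.cos (2 * v)
        - 16708985 * Real.cos (4 * v) + 24862148 * Real.cos (5 * v)) * v ^ 2
      + 81 * (3175117 * v ^ 2 - 224000 * Real.cos (3 * v) + 448000 * Real.cos (4 * v)
        - 448000 * Real.cos (5 * v) + 224000 * Real.cos (6 * v)))
    / (206438400 * v ^ 2 * (Real.sin (v / 2)) ^ 10)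

/-- The variable coefficient `b₄(v)` of the phase-fitted method PF-D0. -/
noncomputable def pfb4 (v : ℝ) : ℝ :=
  (30675810 * v ^ 2 * Real.cos v - 42958788 * v ^ 2
      + 75 * (161280 - 611893 * v ^ 2) * Real.cos (3 * v)
      + 140 * (152411 * v ^ 2 - 172800) * Real.cos (4 * v)
      + (24192000 - 17594587 * v ^ 2) * Real.cos (5 * v)
      - 12096000 * Real.cos (6 * v))
    / (51609600 * v ^ 2 * (Real.sin (v / 2)) ^ 10)

/-- The variable coefficient `b₅(v)` of the phase-fitted method PF-D0. -/
noncomputable def pfb5 (v : ℝ) : ℝ :=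
  ((-61351620) * v ^ 2 * Real.cos (2 * v) + 85936557 * v ^ 2
      + 30 * (6120959 * v ^ 2 - 1411200) * Real.cos (3 * v)
      + 25 * (3386880 - 3191761 * v ^ 2) * Real.cos (4 * v)
      + (62092318 * v ^ 2 - 84672000) * Real.cos (5 * v)
      + 42336000 * Real.cos (6 * v))
    / (103219200 * v ^ 2 * (Real.sin (v / 2)) ^ 10)

/-- The variable coefficient `b₆(v)` of the phase-fitted method PF-D0. -/
noncomputable def pfb6 (v : ℝ) : ℝ :=
  (((-171873114) * Real.cos v + 171835152 * Real.cos (2 * v)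
        - 257184477 * Real.cos (3 * v) + 103937264 * Real.cos (4 * v)
        - 75329225 * Real.cos (5 * v)) * v ^ 2
      + 50803200 * (Real.cos (3 * v) - 2 * Real.cos (4 * v)
        + 2 * Real.cos (5 * v) - Real.cos (6 * v)))
    / (103219200 * v ^ 2 * (Real.sin (v / 2)) ^ 10)

open Finset Complex

noncomputable def T14 (x : ℝ) : ℝ :=
  1 - x^2/2 + x^4/24 - x^6/720 + x^8/40320 - x^10/3628800 + x^12/479001600
    - x^14/87178291200

theorem cos_taylor16 {x : ℝ} (hx : |x| ≤ 1) : |Real.cos x - T14 x| ≤ |x| ^ 16 := by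
  have hfac : ((Nat.factorial 16 : ℕ) : ℝ) = 20922789888000 := by
    norm_num [Nat.factorial]
  have hb1 := Complex.exp_bound (x := (x:ℂ) * I) (by simpa) (show 0 < 16 by norm_num)
  have hb2 := Complex.exp_bound (x := -(x:ℂ) * I) (by simpa) (show 0 < 16 by norm_num)
  have h6 : (I:ℂ)^6 = -1 := by rw [(by norm_num : (6:ℕ) = 2*3), pow_mul, Complex.I_sq]; norm_num
  have h8 : (I:ℂ)^8 = 1 := by rw [(by norm_num : (8:ℕ) = 2*4), pow_mul, Complex.I_sq]; norm_num
  have h10 : (I:ℂ)^10 = -1 := by rw [(by norm_num : (10:ℕ) = 2*5), pow_mul, Complex.I_sq]; norm_num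
  have h12 : (I:ℂ)^12 = 1 := by rw [(by norm_num : (12:ℕ) = 2*6), pow_mul, Complex.I_sq]; norm_num
  have h14 : (I:ℂ)^14 = -1 := by rw [(by norm_num : (14:ℕ) = 2*7), pow_mul, Complex.I_sq]; norm_num
  calc
    |Real.cos x - T14 x| = ‖Complex.cos x - (T14 x : ℝ)‖ := by
      rw [← Real.norm_eq_abs, ← Complex.norm_real]; push_cast [Complex.ofReal_cos]; ring_nf
    _ = ‖((Complex.exp (x * I) - ∑ m ∈ range 16, (x * I) ^ m / m.factorial) +
          (Complex.exp (-x * I) - ∑ m ∈ range 16, (-x * I) ^ m / m.factorial)) / 2‖ := by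
      congr 1
      rw [Complex.cos]
      have : ((T14 x : ℝ) : ℂ) = ((∑ m ∈ range 16, ((x:ℂ) * I) ^ m / m.factorial) +
          (∑ m ∈ range 16, (-(x:ℂ) * I) ^ m / m.factorial)) / 2 := by
        simp only [sum_range_succ, range_zero, sum_empty, T14]
        push_cast
        simp [Nat.factorial]
        ring_nf
        simp [Complex.I_sq, h6, h8, h10, h12, h14]
        ring_nf
      rw [this]
      ring
    _ ≤ ‖(Complex.exp (x * I) - ∑ m ∈ range 16, (x * I) ^ m / m.factorial)‖ / 2 +
          ‖(Complex.exp (-x * I) - ∑ m ∈ range 16, (-x * I) ^ m / m.factorial)‖ / 2 := by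
      rw [norm_div, Complex.norm_two, ← add_div]
      gcongr
      exact norm_add_le _ _
    _ ≤ |x| ^ 16 := by
      have e1 : ‖(x:ℂ) * I‖ = |x| := by simp
      have e2 : ‖-(x:ℂ) * I‖ = |x| := by simp
      rw [e1] at hb1
      rw [e2] at hb2
      push_cast [hfac] at hb1 hb2
      nlinarith [pow_nonneg (abs_nonneg x) 16, hb1, hb2]

noncomputable def Mfun (v : ℝ) : ℝ :=
  ((-124184636) * Real.cos v + 70378348 * Real.cos (2 * v) - 24862148 * Real.cos (3 * v)
        + 5153611 * Real.cos (4 * v)) * v ^ 2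
      + 25 * (3013169 * v ^ 2 - 16128 * Real.cos (3 * v) + 32256 * Real.cos (4 * v)
        - 32256 * Real.cos (5 * v) + 16128 * Real.cos (6 * v))
      - (90987349/264) * v ^ 2 * (252 - 420 * Real.cos v + 240 * Real.cos (2 * v)
        - 90 * Real.cos (3 * v) + 20 * Real.cos (4 * v) - 2 * Real.cos (5 * v))

set_option maxHeartbeats 2000000 in
theorem Mfun_est {v : ℝ} (h0 : 0 < v) (h1 : v ≤ 1/6) :
    |Mfun v - (-16301796103/1441440) * v ^ 14| ≤ 10 ^ 19 * v ^ 16 := by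
  have hv1 : |v| ≤ 1 := by rw [abs_of_pos h0]; linarith
  have hv2 : v ^ 2 ≤ 1 := by nlinarith
  have hv2' : (0:ℝ) ≤ v ^ 2 := by positivity
  have key : Mfun v - (-16301796103/1441440) * v ^ 14
      = (-74791195537/1729728) * v ^ 16
      + (452495223/22 * v ^ 2) * (Real.cos v - T14 v)
      + (-135711662/11 * v ^ 2) * (Real.cos (2*v) - T14 (2*v))
      + (270875723/44 * v ^ 2 - 403200) * (Real.cos (3*v) - T14 (3*v))
      + (-114798419/66 * v ^ 2 + 806400) * (Real.cos (4*v) - T14 (4*v))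
      + (90987349/132 * v ^ 2 - 806400) * (Real.cos (5*v) - T14 (5*v))
      + (403200 : ℝ) * (Real.cos (6*v) - T14 (6*v)) := by
    simp only [Mfun, T14]; ring
  have E1 : |Real.cos v - T14 v| ≤ 1 * v ^ 16 := by
    have h := cos_taylor16 hv1
    rw [abs_of_pos h0] at h; linarith
  have E2 : |Real.cos (2*v) - T14 (2*v)| ≤ 65536 * v ^ 16 := by
    have h := cos_taylor16 (x := 2*v) (by rw [abs_of_pos (by linarith)]; linarith)
    rw [abs_of_pos (show (0:ℝ) < 2*v by linarith)] at h
    have : (2*v) ^ 16 = 65536 * v ^ 16 := by ring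
    linarith
  have E3 : |Real.cos (3*v) - T14 (3*v)| ≤ 43046721 * v ^ 16 := by
    have h := cos_taylor16 (x := 3*v) (by rw [abs_of_pos (by linarith)]; linarith)
    rw [abs_of_pos (show (0:ℝ) < 3*v by linarith)] at h
    have : (3*v) ^ 16 = 43046721 * v ^ 16 := by ring
    linarith
  have E4 : |Real.cos (4*v) - T14 (4*v)| ≤ 4294967296 * v ^ 16 := by
    have h := cos_taylor16 (x := 4*v) (by rw [abs_of_pos (by linarith)]; linarith)
    rw [abs_of_pos (show (0:ℝ) < 4*v by linarith)] at h
    have : (4*v) ^ 16 = 4294967296 * v ^ 16 := by ring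
    linarith
  have E5 : |Real.cos (5*v) - T14 (5*v)| ≤ 152587890625 * v ^ 16 := by
    have h := cos_taylor16 (x := 5*v) (by rw [abs_of_pos (by linarith)]; linarith)
    rw [abs_of_pos (show (0:ℝ) < 5*v by linarith)] at h
    have : (5*v) ^ 16 = 152587890625 * v ^ 16 := by ring
    linarith
  have E6 : |Real.cos (6*v) - T14 (6*v)| ≤ 2821109907456 * v ^ 16 := by
    have h := cos_taylor16 (x := 6*v) (by rw [abs_of_pos (by linarith)]; linarith)
    rw [abs_of_pos (show (0:ℝ) < 6*v by linarith)] at h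
    have : (6*v) ^ 16 = 2821109907456 * v ^ 16 := by ring
    linarith
  have g1 : |(452495223/22 : ℝ) * v ^ 2| ≤ 20567965 := by
    rw [abs_le]; constructor <;> nlinarith
  have g2 : |(-135711662/11 : ℝ) * v ^ 2| ≤ 12337424 := by
    rw [abs_le]; constructor <;> nlinarith
  have g3 : |(270875723/44 : ℝ) * v ^ 2 - 403200| ≤ 6559467 := by
    rw [abs_le]; constructor <;> nlinarith
  have g4 : |(-114798419/66 : ℝ) * v ^ 2 + 806400| ≤ 2545770 := by
    rw [abs_le]; constructor <;> nlinarith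
  have g5 : |(90987349/132 : ℝ) * v ^ 2 - 806400| ≤ 1495699 := by
    rw [abs_le]; constructor <;> nlinarith
  have g6 : |(403200 : ℝ)| ≤ 403200 := by norm_num
  have v16 : (0:ℝ) ≤ v ^ 16 := by positivity
  have t1 := mul_le_mul g1 E1 (abs_nonneg _) (by norm_num)
  have t2 := mul_le_mul g2 E2 (abs_nonneg _) (by norm_num)
  have t3 := mul_le_mul g3 E3 (abs_nonneg _) (by norm_num)
  have t4 := mul_le_mul g4 E4 (abs_nonneg _) (by norm_num)
  have t5 := mul_le_mul g5 E5 (abs_nonneg _) (by norm_num)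
  have t6 := mul_le_mul g6 E6 (abs_nonneg _) (by norm_num)
  rw [key]
  set X0 := (-74791195537/1729728 : ℝ) * v ^ 16 with hX0
  set X1 := (452495223/22 * v ^ 2) * (Real.cos v - T14 v) with hX1
  set X2 := (-135711662/11 * v ^ 2) * (Real.cos (2*v) - T14 (2*v)) with hX2
  set X3 := (270875723/44 * v ^ 2 - 403200) * (Real.cos (3*v) - T14 (3*v)) with hX3
  set X4 := (-114798419/66 * v ^ 2 + 806400) * (Real.cos (4*v) - T14 (4*v)) with hX4
  set X5 := (90987349/132 * v ^ 2 - 806400) * (Real.cos (5*v) - T14 (5*v)) with hX5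
  set X6 := (403200 : ℝ) * (Real.cos (6*v) - T14 (6*v)) with hX6
  have habs : |X0 + X1 + X2 + X3 + X4 + X5 + X6|
      ≤ |X0| + |X1| + |X2| + |X3| + |X4| + |X5| + |X6| := by
    have a1 := abs_add_le (X0 + X1 + X2 + X3 + X4 + X5) X6
    have a2 := abs_add_le (X0 + X1 + X2 + X3 + X4) X5
    have a3 := abs_add_le (X0 + X1 + X2 + X3) X4
    have a4 := abs_add_le (X0 + X1 + X2) X3
    have a5 := abs_add_le (X0 + X1) X2
    have a6 := abs_add_le X0 X1
    linarith
  have b0 : |X0| ≤ 43240 * v ^ 16 := by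
    rw [hX0, abs_mul, _root_.abs_of_nonneg v16]
    have : |(-74791195537/1729728 : ℝ)| = 74791195537/1729728 := by
      rw [abs_of_nonpos (by norm_num)]; norm_num
    rw [this]; nlinarith
  have b1 : |X1| ≤ 20567965 * (1 * v ^ 16) := by rw [hX1, abs_mul]; exact t1
  have b2 : |X2| ≤ 12337424 * (65536 * v ^ 16) := by rw [hX2, abs_mul]; exact t2
  have b3 : |X3| ≤ 6559467 * (43046721 * v ^ 16) := by rw [hX3, abs_mul]; exact t3
  have b4 : |X4| ≤ 2545770 * (4294967296 * v ^ 16) := by rw [hX4, abs_mul]; exact t4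
  have b5 : |X5| ≤ 1495699 * (152587890625 * v ^ 16) := by rw [hX5, abs_mul]; exact t5
  have b6 : |X6| ≤ 403200 * (2821109907456 * v ^ 16) := by rw [hX6, abs_mul]; exact t6
  nlinarith [habs, b0, b1, b2, b3, b4, b5, b6]

theorem Mdiv_tendsto :
    Tendsto (fun v : ℝ => Mfun v / v ^ 14) (nhdsWithin 0 (Set.Ioi 0))
      (nhds (-16301796103/1441440)) := by
  have h0 : Tendsto (fun v : ℝ => Mfun v / v ^ 14 - (-16301796103/1441440))
      (nhdsWithin 0 (Set.Ioi 0)) (nhds 0) := by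
    apply squeeze_zero_norm' (a := fun v : ℝ => 10 ^ 19 * v ^ 2)
    · filter_upwards [Ioo_mem_nhdsGT_of_mem
        (show (0:ℝ) ∈ Set.Ico 0 (1/6) by norm_num)] with v hv
      obtain ⟨hv0, hv6⟩ := hv
      have hest := Mfun_est hv0 hv6.le
      have hv14 : (0:ℝ) < v ^ 14 := by positivity
      have heq : Mfun v / v ^ 14 - (-16301796103/1441440)
          = (Mfun v - (-16301796103/1441440) * v ^ 14) / v ^ 14 := by
        field_simp
      rw [Real.norm_eq_abs, heq, abs_div, _root_.abs_of_pos hv14, div_le_iff₀ hv14]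
      calc |Mfun v - (-16301796103/1441440) * v ^ 14| ≤ 10 ^ 19 * v ^ 16 := hest
        _ = 10 ^ 19 * v ^ 2 * v ^ 14 := by ring
    · have hc : Continuous (fun v : ℝ => (10:ℝ) ^ 19 * v ^ 2) :=
        continuous_const.mul (continuous_pow 2)
      have h := (hc.tendsto 0).mono_left (nhdsWithin_le_nhds (s := Set.Ioi (0:ℝ)))
      have hz : (10:ℝ) ^ 19 * (0:ℝ) ^ 2 = 0 := by norm_num
      rw [hz] at h
      exact h
  have h2 := h0.add_const (-16301796103/1441440 : ℝ)
  rw [zero_add] at h2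
  exact h2.congr (fun v => by ring)

theorem sinratio_tendsto :
    Tendsto (fun v : ℝ => ((v/2) / Real.sin (v/2)) ^ 10)
      (nhdsWithin 0 (Set.Ioi 0)) (nhds 1) := by
  have hslope : Tendsto (fun x : ℝ => Real.sin x / x)
      (nhdsWithin 0 {(0:ℝ)}ᶜ) (nhds 1) := by
    have h := hasDerivAt_iff_tendsto_slope.mp (Real.hasDerivAt_sin 0)
    rw [Real.cos_zero] at h
    refine h.congr' ?_
    filter_upwards with x
    simp [slope_def_field]
  have hmap : Tendsto (fun v : ℝ => v/2) (nhdsWithin 0 (Set.Ioi 0))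
      (nhdsWithin 0 {(0:ℝ)}ᶜ) := by
    apply tendsto_nhdsWithin_of_tendsto_nhds_of_eventually_within
    · have := (continuous_id.div_const 2).tendsto (0:ℝ)
      simpa using this.mono_left nhdsWithin_le_nhds
    · filter_upwards [self_mem_nhdsWithin] with v hv
      simp only [Set.mem_compl_iff, Set.mem_singleton_iff]
      have : (0:ℝ) < v := hv
      positivity
  have hcomp : Tendsto (fun v : ℝ => Real.sin (v/2) / (v/2))
      (nhdsWithin 0 (Set.Ioi 0)) (nhds 1) := hslope.comp hmap
  have hinv := hcomp.inv₀ (by norm_num)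
  have : Tendsto (fun v : ℝ => (v/2) / Real.sin (v/2))
      (nhdsWithin 0 (Set.Ioi 0)) (nhds 1) := by
    have heq : (fun v : ℝ => (v/2) / Real.sin (v/2))
        = fun v : ℝ => (Real.sin (v/2) / (v/2))⁻¹ := by
      funext v; rw [inv_div]
    rw [heq]
    simpa using hinv
  simpa using this.pow 10

theorem pfd0_key_eq {v : ℝ} (hv0 : 0 < v) (hv6 : v < 1/6) :
    (pfb1 v - (90987349 / 53222400)) / v ^ 2
      = Mfun v / v ^ 14 * ((v/2) / Real.sin (v/2)) ^ 10 * (1024 / 206438400) := by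
  set c := Real.cos v with hc
  have hs : 0 < Real.sin (v/2) := by
    apply Real.sin_pos_of_pos_of_lt_pi (by linarith)
    have := Real.pi_gt_three
    linarith
  have e2 : Real.cos (2*v) = 2*c^2 - 1 := Real.cos_two_mul v
  have e3 : Real.cos (3*v) = 4*c^3 - 3*c := Real.cos_three_mul v
  have e4 : Real.cos (4*v) = 8*c^4 - 8*c^2 + 1 := by
    rw [show (4:ℝ)*v = 2*(2*v) by ring, Real.cos_two_mul, Real.cos_two_mul]; ring
  have e5 : Real.cos (5*v) = 16*c^5 - 20*c^3 + 5*c := by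
    have h : Real.cos (5*v) + Real.cos (3*v) = 2 * Real.cos (4*v) * Real.cos v := by
      rw [show (5:ℝ)*v = 4*v + v by ring, show (3:ℝ)*v = 4*v - v by ring,
        Real.cos_add, Real.cos_sub]
      ring
    rw [e3, e4] at h; linarith
  have hs10 : Real.sin (v/2) ^ 10 = (252 - 420 * Real.cos v + 240 * Real.cos (2*v)
      - 90 * Real.cos (3*v) + 20 * Real.cos (4*v) - 2 * Real.cos (5*v)) / 1024 := by
    have hsq : Real.sin (v/2) ^ 2 = (1 - Real.cos v) / 2 := by
      have h := Real.cos_two_mul (v/2)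
      rw [show 2*(v/2) = v by ring] at h
      have h2 := Real.sin_sq_add_cos_sq (v/2)
      linarith
    rw [show (10:ℕ) = 2*5 from rfl, pow_mul, hsq, e2, e3, e4, e5]
    ring
  rw [pfb1, Mfun, div_pow, hs10]
  have hne : (252 - 420 * Real.cos v + 240 * Real.cos (2*v)
      - 90 * Real.cos (3*v) + 20 * Real.cos (4*v) - 2 * Real.cos (5*v)) ≠ 0 := by
    have : Real.sin (v/2) ^ 10 > 0 := by positivity
    rw [hs10] at this
    intro h
    rw [h] at this
    norm_num at this
  have hvne : v ≠ 0 := hv0.ne'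
  generalize hD : (252 - 420 * Real.cos v + 240 * Real.cos (2*v)
      - 90 * Real.cos (3*v) + 20 * Real.cos (4*v) - 2 * Real.cos (5*v)) = D at hne ⊢
  field_simp
  ring


/-- The PF-D0 coefficient `pfb1` tends to the corresponding classical
Quinlan–Tremaine coefficient as `v → 0⁺`, with the stated `v²`-Taylor coefficient. -/
theorem pfd0_b1_limit :
    Tendsto pfb1 (nhdsWithin 0 (Set.Ioi 0)) (nhds (90987349 / 53222400)) ∧
    Tendsto (fun v : ℝ => (pfb1 v - (90987349 / 53222400)) / v ^ 2)
      (nhdsWithin 0 (Set.Ioi 0)) (nhds (-16301796103 / 290594304000)) := by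
  have h2 : Tendsto (fun v : ℝ => (pfb1 v - (90987349 / 53222400)) / v ^ 2)
      (nhdsWithin 0 (Set.Ioi 0)) (nhds (-16301796103 / 290594304000)) := by
    have hprod := (Mdiv_tendsto.mul sinratio_tendsto).mul_const (1024 / 206438400 : ℝ)
    have hval : (-16301796103/1441440 : ℝ) * 1 * (1024 / 206438400)
        = -16301796103 / 290594304000 := by norm_num
    rw [hval] at hprod
    refine hprod.congr' ?_
    filter_upwards [Ioo_mem_nhdsGT_of_mem
      (show (0:ℝ) ∈ Set.Ico 0 (1/6) by norm_num)] with v hv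
    exact (pfd0_key_eq hv.1 hv.2).symm
  refine ⟨?_, h2⟩
  have hv2 : Tendsto (fun v : ℝ => v ^ 2) (nhdsWithin 0 (Set.Ioi 0)) (nhds 0) := by
    have := (continuous_pow 2).tendsto (0:ℝ)
    simpa using this.mono_left nhdsWithin_le_nhds
  have hmul := hv2.mul h2
  rw [zero_mul] at hmul
  have := hmul.add_const (90987349 / 53222400 : ℝ)
  rw [zero_add] at this
  refine this.congr' ?_
  filter_upwards [self_mem_nhdsWithin] with v hv
  have hvne : v ≠ 0 := ne_of_gt hv
  field_simp
  ring
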